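/- Let G = (V, E) be a finite connected loopless multigraph and let D be an effective divisor on G. Let F be the set of D-blocking edges and let U be the vertex set of a connected component of the graph (V, E ∖ F). Then for every effective divisor D' equivalent to D, one has Σ_{u∈U} D'(u) = Σ_{u∈U} D(u). -/
import Mathlib


open Finset
open scoped Classical

variable {V : Type*}

/-- Laplacian of the multigraph with edge multiplicity function `m`, applied to `x`. -/
def lap [Fintype V] (m : V → V → ℕ) (x : V → ℤ) : V → ℤ :=
  fun u => (∑ w, (m u w : ℤ)) * x u - ∑ w, (m u w : ℤ) * x w

/-- A divisor is effective if it is nonnegative. -/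
def Effective (D : V → ℤ) : Prop := ∀ v, 0 ≤ D v

/-- Linear equivalence of divisors. -/
def DivEquiv [Fintype V] (m : V → V → ℕ) (D D' : V → ℤ) : Prop :=
  ∃ x : V → ℤ, D - D' = lap m x

/-- Degree of a divisor. -/
def divDeg [Fintype V] (D : V → ℤ) : ℤ := ∑ v, D v

/-- Indicator vector of a subset. -/
def indVec [DecidableEq V] (U : Finset V) : V → ℤ := fun v => if v ∈ U then 1 else 0

/-- The underlying graph of the multigraph is connected. -/
def Conn [Fintype V] (m : V → V → ℕ) : Prop :=
  (SimpleGraph.fromRel fun u v => m u v ≠ 0).Connected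

/-- The equivalence relation `≡_D` on vertices. -/
def DEquiv [Fintype V] (m : V → V → ℕ) (D : V → ℤ) (u v : V) : Prop :=
  ∀ x : V → ℤ, Effective (D - lap m x) → x u = x v

/-- Rank of a divisor. -/
noncomputable def divRank [Fintype V] (m : V → V → ℕ) (D : V → ℤ) : ℤ :=
  if ∃ D' : V → ℤ, DivEquiv m D D' ∧ Effective D' then
    sSup {k : ℤ | 0 ≤ k ∧ ∀ E : V → ℤ, Effective E → divDeg E ≤ k →
      ∃ D' : V → ℤ, DivEquiv m (D - E) D' ∧ Effective D'}
  else -1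

/-- Gonality of the multigraph. -/
noncomputable def dgon (V : Type*) [Fintype V] (m : V → V → ℕ) : ℤ :=
  sInf {d : ℤ | ∃ D : V → ℤ, 1 ≤ divRank m D ∧ divDeg D = d}

/-- Lemma 3: if `F` is the set of `D`-blocking edges and `U` is (the vertex set of) a connected
component of `(V, E ∖ F)` — i.e. the reachability class of some vertex `u₀` in the graph whose
edges are the non-blocking edges — then the total number of chips on `U` is the same for every
effective divisor `D'` equivalent to `D`. -/
theorem chips_constant_on_component [Fintype V] [DecidableEq V] (m : V → V → ℕ)
    (hsymm : ∀ u v, m u v = m v u) (hloop : ∀ v, m v v = 0) (hconn : Conn m)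
    (D : V → ℤ) (hD : Effective D) (u₀ : V)
    (D' : V → ℤ) (hD' : Effective D') (hequiv : DivEquiv m D D') :
    ∑ᶠ w ∈ {w | (SimpleGraph.fromRel fun a b => m a b ≠ 0 ∧ ¬ DEquiv m D a b).Reachable u₀ w},
        D' w =
      ∑ᶠ w ∈ {w | (SimpleGraph.fromRel fun a b => m a b ≠ 0 ∧ ¬ DEquiv m D a b).Reachable u₀ w},
        D w := by
  classical
  obtain ⟨x, hx⟩ := hequiv
  have hDx : D - lap m x = D' := by rw [← hx]; abel
  have hxeff : Effective (D - lap m x) := by rw [hDx]; exact hD'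
  set H := SimpleGraph.fromRel fun a b => m a b ≠ 0 ∧ ¬ DEquiv m D a b with hH
  set S : Set V := {w | H.Reachable u₀ w} with hS
  have hfin : S.Finite := Set.toFinite S
  set T := hfin.toFinset with hT
  have key : ∀ u w, u ∈ T → m u w ≠ 0 → w ∉ T → x u = x w := by
    intro u w hu hm hw
    rw [hT, Set.Finite.mem_toFinset] at hu hw
    by_cases huw : u = w
    · rw [huw]
    have hadj : ¬ H.Adj u w := fun h => hw (hu.trans h.reachable)
    rw [hH, SimpleGraph.fromRel_adj] at hadj
    push_neg at hadj
    rcases hadj huw with ⟨h1, h2⟩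
    exact (h1 hm) x hxeff
  have hexp : ∀ u, lap m x u = ∑ w, (m u w : ℤ) * (x u - x w) := by
    intro u
    rw [lap, Finset.sum_mul, ← Finset.sum_sub_distrib]
    exact Finset.sum_congr rfl fun w _ => (mul_sub _ _ _).symm
  have hzero : ∑ u ∈ T, lap m x u = 0 := by
    have step1 : ∑ u ∈ T, lap m x u = ∑ u ∈ T, ∑ w ∈ T, (m u w : ℤ) * (x u - x w) := by
      refine Finset.sum_congr rfl fun u hu => ?_
      rw [hexp u]
      refine (Finset.sum_subset (Finset.subset_univ T) fun w _ hw => ?_).symm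
      by_cases hm : m u w = 0
      · rw [hm]; simp
      · rw [key u w hu hm hw]; ring
    rw [step1]
    set A := ∑ u ∈ T, ∑ w ∈ T, (m u w : ℤ) * (x u - x w) with hA
    have hAneg : A = -A := by
      calc A = ∑ w ∈ T, ∑ u ∈ T, (m u w : ℤ) * (x u - x w) := Finset.sum_comm
      _ = ∑ w ∈ T, ∑ u ∈ T, -((m w u : ℤ) * (x w - x u)) := by
          refine Finset.sum_congr rfl fun w _ => Finset.sum_congr rfl fun u _ => ?_
          rw [hsymm w u]; ring
      _ = -A := by rw [hA]; simp
    linarith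
  have hconv : ∀ f : V → ℤ, ∑ᶠ w ∈ S, f w = ∑ w ∈ T, f w := by
    intro f
    exact hT ▸ finsum_mem_eq_finite_toFinset_sum f hfin
  have hsub : ∑ w ∈ T, (D w - D' w) = 0 := by
    have : ∀ w, D w - D' w = lap m x w := fun w => congrFun hx w
    rw [Finset.sum_congr rfl fun w _ => this w]
    exact hzero
  rw [hconv D', hconv D]
  rw [Finset.sum_sub_distrib] at hsub
  linarith
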